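/- Let φ: M_n → M_m be a positive linear map and X ∈ M_m positive semidefinite. Then ker(R_X) ⊆ ker(φ*) (as operators on the Hilbert–Schmidt space M_m, where R_X(K) = KX) if and only if ker(X) ⊆ ker(φ(1_n)) (as subspaces of ℂ^m). -/

import Mathlib

open Matrix ComplexOrder

-- rank one mulVec
lemma aux_vecMulVec_mulVec {d : ℕ} (x y v : Fin d → ℂ) :
    vecMulVec x y *ᵥ v = (y ⬝ᵥ v) • x := by
  ext a
  simp [vecMulVec_apply, mulVec, dotProduct, Finset.sum_mul, Finset.mul_sum,
    mul_comm, mul_left_comm]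

-- rank one Hermitian
lemma aux_vecMulVec_herm {d : ℕ} (u : Fin d → ℂ) :
    (vecMulVec u (star u)).IsHermitian := by
  ext a b
  simp [conjTranspose_apply, vecMulVec_apply, mul_comm]

-- rank one PSD
lemma aux_psd_vecMulVec {d : ℕ} (u : Fin d → ℂ) :
    (vecMulVec u (star u)).PosSemidef := by
  refine PosSemidef.of_dotProduct_mulVec_nonneg (aux_vecMulVec_herm u) fun v => ?_
  rw [aux_vecMulVec_mulVec, dotProduct_smul]
  have : star v ⬝ᵥ u = star (star u ⬝ᵥ v) := by
    simp [dotProduct, star_sum, mul_comm]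
  rw [smul_eq_mul, mul_comm, this]
  exact star_mul_self_nonneg _

lemma aux_star_dot_self {d : ℕ} (u : Fin d → ℂ) : star (star u ⬝ᵥ u) = star u ⬝ᵥ u := by
  simp [dotProduct, star_sum, mul_comm]

lemma aux_inner_equiv_symm {d : ℕ} (x y : Fin d → ℂ) :
    inner ℂ ((WithLp.equiv 2 _).symm x : EuclideanSpace ℂ (Fin d)) ((WithLp.equiv 2 _).symm y)
      = star x ⬝ᵥ y := by
  rw [dotProduct_comm]; rfl

lemma aux_psd_compl {d : ℕ} (u : Fin d → ℂ) :
    ((star u ⬝ᵥ u) • (1 : Matrix (Fin d) (Fin d) ℂ) - vecMulVec u (star u)).PosSemidef := by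
  refine PosSemidef.of_dotProduct_mulVec_nonneg ?_ ?_
  · show _ = _
    rw [conjTranspose_sub, conjTranspose_smul, conjTranspose_one, aux_star_dot_self,
      aux_vecMulVec_herm u]
  · intro v
    rw [sub_mulVec, smul_mulVec, one_mulVec, aux_vecMulVec_mulVec,
      dotProduct_sub, dotProduct_smul, dotProduct_smul]
    set x : EuclideanSpace ℂ (Fin d) := (WithLp.equiv 2 _).symm u with hx
    set y : EuclideanSpace ℂ (Fin d) := (WithLp.equiv 2 _).symm v with hy
    have hxx : star u ⬝ᵥ u = ((‖x‖ : ℂ))^2 := by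
      rw [← aux_inner_equiv_symm u u, ← hx, inner_self_eq_norm_sq_to_K]; rfl
    have hyy : star v ⬝ᵥ v = ((‖y‖ : ℂ))^2 := by
      rw [← aux_inner_equiv_symm v v, ← hy, inner_self_eq_norm_sq_to_K]; rfl
    have hsvu : star v ⬝ᵥ u = star (star u ⬝ᵥ v) := by
      simp [dotProduct, star_sum, mul_comm]
    have hd : star u ⬝ᵥ v = (inner ℂ x y : ℂ) := by
      rw [← aux_inner_equiv_symm u v, ← hx, ← hy]
    rw [hxx, hyy, hsvu, hd, smul_eq_mul, smul_eq_mul]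
    have : (inner ℂ x y : ℂ) * star (inner ℂ x y : ℂ) = ((‖(inner ℂ x y : ℂ)‖ : ℂ))^2 := by
      rw [Complex.star_def, Complex.mul_conj']
    rw [this]
    have hcs : ‖(inner ℂ x y : ℂ)‖^2 ≤ (‖x‖^2) * (‖y‖^2) := by
      have h1 := norm_inner_le_norm (𝕜 := ℂ) x y
      calc ‖(inner ℂ x y : ℂ)‖^2 ≤ (‖x‖*‖y‖)^2 := by
            exact pow_le_pow_left₀ (norm_nonneg _) h1 2
        _ = ‖x‖^2 * ‖y‖^2 := by ring
    have : ((‖x‖:ℂ))^2 * ((‖y‖:ℂ))^2 - ((‖(inner ℂ x y : ℂ)‖:ℂ))^2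
        = ((‖x‖^2 * ‖y‖^2 - ‖(inner ℂ x y : ℂ)‖^2 : ℝ) : ℂ) := by push_cast; ring
    rw [this, Complex.zero_le_real]
    linarith

open Complex in
lemma aux_polar {d : ℕ} (x y : Fin d → ℂ) :
    vecMulVec x (star y) = (4:ℂ)⁻¹ •
      (vecMulVec (x + y) (star (x + y))
        + I • vecMulVec (x + I • y) (star (x + I • y))
        + (-1:ℂ) • vecMulVec (x + (-1:ℂ) • y) (star (x + (-1:ℂ) • y))
        + (-I) • vecMulVec (x + (-I) • y) (star (x + (-I) • y))) := by
  ext a b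
  simp only [vecMulVec_apply, Matrix.smul_apply, Matrix.add_apply, Pi.add_apply, Pi.smul_apply,
    Pi.star_apply, star_add, star_mul', smul_eq_mul, star_smul, Complex.star_def, map_neg,
    Complex.conj_I, _root_.map_one, RingHom.id_apply]
  have h2 : (I:ℂ)^2 = -1 := Complex.I_sq
  field_simp
  ring_nf
  rw [Complex.I_sq]
  ring

lemma aux_std_eq_vecMulVec {d : ℕ} (i j : Fin d) :
    Matrix.single i j (1:ℂ) = vecMulVec (Pi.single i 1) (star (Pi.single j 1)) := by
  ext a b
  simp [Matrix.single, vecMulVec_apply, Pi.single_apply, Pi.star_apply, apply_ite,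
    eq_comm, and_comm]
  aesop

open Complex in
lemma aux_all {n m : ℕ}
    (φ : Matrix (Fin n) (Fin n) ℂ →ₗ[ℂ] Matrix (Fin m) (Fin m) ℂ)
    (hφ : ∀ X : Matrix (Fin n) (Fin n) ℂ, X.PosSemidef → (φ X).PosSemidef)
    (w : Fin m → ℂ) (hw : φ 1 *ᵥ w = 0) :
    ∀ B : Matrix (Fin n) (Fin n) ℂ, φ B *ᵥ w = 0 := by
  -- step 1 : rank ones
  have step1 : ∀ u : Fin n → ℂ, φ (vecMulVec u (star u)) *ᵥ w = 0 := by
    intro u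
    have h1 := hφ _ (aux_psd_vecMulVec u)
    have h2 := hφ _ (aux_psd_compl u)
    have hle := h2.dotProduct_mulVec_nonneg w
    rw [map_sub, _root_.map_smul, sub_mulVec, smul_mulVec, hw, smul_zero, zero_sub,
      dotProduct_neg] at hle
    have hge := h1.dotProduct_mulVec_nonneg w
    have hzero : star w ⬝ᵥ φ (vecMulVec u (star u)) *ᵥ w = 0 :=
      le_antisymm (by simpa using neg_nonneg.mp (by simpa using hle)) hge
    exact (h1.dotProduct_mulVec_zero_iff w).mp hzero
  -- step 2 : polarized rank ones
  have step2 : ∀ x y : Fin n → ℂ, φ (vecMulVec x (star y)) *ᵥ w = 0 := by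
    intro x y
    rw [aux_polar x y, _root_.map_smul, map_add, map_add, map_add, _root_.map_smul, _root_.map_smul, _root_.map_smul,
      smul_mulVec, add_mulVec, add_mulVec, add_mulVec,
      smul_mulVec, smul_mulVec, smul_mulVec,
      step1, step1, step1, step1]
    simp
  -- step 3 : general B via the standard basis
  let T : Matrix (Fin n) (Fin n) ℂ →ₗ[ℂ] (Fin m → ℂ) :=
    { toFun := fun B => φ B *ᵥ w
      map_add' := by intro A B; simp [map_add, add_mulVec]
      map_smul' := by intro c B; simp [_root_.map_smul, smul_mulVec]
    }
  intro B
  show T B = 0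
  rw [matrix_eq_sum_single B, map_sum]
  refine Finset.sum_eq_zero fun i _ => ?_
  rw [map_sum]
  refine Finset.sum_eq_zero fun j _ => ?_
  have : Matrix.single i j (B i j) = B i j • Matrix.single i j (1:ℂ) := by simp
  rw [this, _root_.map_smul, aux_std_eq_vecMulVec]
  have := step2 (Pi.single i 1) (Pi.single j 1)
  show (B i j) • (φ (vecMulVec (Pi.single i 1) (star (Pi.single j 1))) *ᵥ w) = 0
  rw [this, smul_zero]

/-- For a positive map `φ` and PSD `X`: `ker R_X ⊆ ker φ*` (on the
Hilbert–Schmidt space `M_m`) iff `ker X ⊆ ker φ(1)` (as subspaces of `ℂ^m`). -/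
theorem ker_rightMul_subset_ker_adjoint_iff {n m : ℕ}
    (φ : Matrix (Fin n) (Fin n) ℂ →ₗ[ℂ] Matrix (Fin m) (Fin m) ℂ)
    (hφ : ∀ X : Matrix (Fin n) (Fin n) ℂ, X.PosSemidef → (φ X).PosSemidef)
    (ψ : Matrix (Fin m) (Fin m) ℂ →ₗ[ℂ] Matrix (Fin n) (Fin n) ℂ)
    (hadj : ∀ (A : Matrix (Fin m) (Fin m) ℂ) (B : Matrix (Fin n) (Fin n) ℂ),
      (Aᴴ * φ B).trace = ((ψ A)ᴴ * B).trace)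
    (X : Matrix (Fin m) (Fin m) ℂ) (hX : X.PosSemidef) :
    (∀ K : Matrix (Fin m) (Fin m) ℂ, K * X = 0 → ψ K = 0) ↔
      LinearMap.ker X.mulVecLin ≤ LinearMap.ker (φ 1).mulVecLin := by
  have hsymm : ∀ j k, X j k = star (X k j) := by
    intro j k
    nth_rewrite 1 [← hX.1]
    rw [conjTranspose_apply]
  constructor
  · -- forward direction
    intro h v hv
    rw [LinearMap.mem_ker, mulVecLin_apply] at hv ⊢
    have hKX : vecMulVec v (star v) * X = 0 := by
      ext i k
      simp only [Matrix.mul_apply, vecMulVec_apply, Pi.star_apply, Matrix.zero_apply]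
      calc ∑ j, v i * star (v j) * X j k
          = v i * star (∑ j, X k j * v j) := by
            rw [star_sum, Finset.mul_sum]
            refine Finset.sum_congr rfl fun j _ => ?_
            rw [hsymm j k, star_mul']
            ring
        _ = 0 := by
            have h1 : (∑ j, X k j * v j) = (X *ᵥ v) k := rfl
            rw [h1, hv]
            simp
    have hψ := h _ hKX
    have htr := hadj (vecMulVec v (star v)) 1
    rw [hψ, (aux_vecMulVec_herm v)] at htr
    simp only [conjTranspose_zero, zero_mul, trace_zero] at htr
    have hdot : star v ⬝ᵥ (φ 1) *ᵥ v = 0 := by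
      rw [← htr, Matrix.trace]
      simp only [diag_apply, Matrix.mul_apply, vecMulVec_apply, Pi.star_apply,
        dotProduct, mulVec]
      rw [Finset.sum_comm]
      refine Finset.sum_congr rfl fun j _ => ?_
      rw [Finset.mul_sum]
      refine Finset.sum_congr rfl fun i _ => ?_
      ring
    exact ((hφ 1 Matrix.PosSemidef.one).dotProduct_mulVec_zero_iff v).mp hdot
  · -- backward direction
    intro h K hKX
    have hrow : ∀ i, φ 1 *ᵥ star (K i) = 0 := by
      intro i
      have hXr : X *ᵥ star (K i) = 0 := by
        ext k
        simp only [mulVec, dotProduct, Pi.star_apply, Pi.zero_apply]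
        calc ∑ j, X k j * star (K i j)
            = star (∑ j, K i j * X j k) := by
              rw [star_sum]
              refine Finset.sum_congr rfl fun j _ => ?_
              rw [hsymm j k, star_mul', star_star]
              ring_nf
          _ = 0 := by
              have h1 : (∑ j, K i j * X j k) = (K * X) i k := rfl
              rw [h1, hKX]
              simp
      have hmem : star (K i) ∈ LinearMap.ker X.mulVecLin :=
        LinearMap.mem_ker.mpr (by rw [mulVecLin_apply]; exact hXr)
      have := h hmem
      rwa [LinearMap.mem_ker, mulVecLin_apply] at this
    have hall : ∀ (i : Fin m) (B : Matrix (Fin n) (Fin n) ℂ), φ B *ᵥ star (K i) = 0 :=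
      fun i => aux_all φ hφ _ (hrow i)
    have htr := hadj K (ψ K)
    have hL : (Kᴴ * φ (ψ K)).trace = 0 := by
      rw [Matrix.trace_mul_comm, Matrix.trace]
      simp only [diag_apply, Matrix.mul_apply, conjTranspose_apply]
      refine Finset.sum_eq_zero fun i _ => ?_
      have h2 := congrFun (hall i (ψ K)) i
      simpa [mulVec, dotProduct] using h2
    rw [hL] at htr
    have hexp : ((ψ K)ᴴ * ψ K).trace
        = ∑ j, ∑ i, ((Complex.normSq ((ψ K) i j) : ℝ) : ℂ) := by
      rw [Matrix.trace]
      simp only [diag_apply, Matrix.mul_apply, conjTranspose_apply]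
      refine Finset.sum_congr rfl fun j _ => Finset.sum_congr rfl fun i _ => ?_
      rw [mul_comm, Complex.star_def, Complex.mul_conj]
    have h0 : (∑ j, ∑ i, Complex.normSq ((ψ K) i j)) = 0 := by
      have h3 : (∑ j, ∑ i, ((Complex.normSq ((ψ K) i j) : ℝ) : ℂ)) = 0 := by
        rw [← hexp, ← htr]
      exact_mod_cast h3
    ext i j
    have h4 := (Finset.sum_eq_zero_iff_of_nonneg
      (fun j _ => Finset.sum_nonneg fun i _ => Complex.normSq_nonneg _)).mp h0 j (Finset.mem_univ j)
    have h5 := (Finset.sum_eq_zero_iff_of_nonneg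
      (fun i _ => Complex.normSq_nonneg _)).mp h4 i (Finset.mem_univ i)
    simpa using Complex.normSq_eq_zero.mp h5
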